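/- Let λ > 0, ν ∈ (0,1), μ > 0, and let (q_r)_{r≥1} be nonnegative reals with Σ_{r≥1} q_r = 1. Suppose exp(μ · Σ_{r≥1} q_r z^r) = Σ_{k≥0} (λz)^k/(k!)^ν for all complex z with |z| strictly less than the radius of convergence of Σ_{r≥1} q_r z^r. Let d be the unique integer with 1/ν ∈ (d−1, d]. Then q_r = 0 for all r > d; i.e., G(z) = Σ_{r≥1} q_r z^r is a polynomial of degree at most d. -/

import Mathlib

open scoped ENNReal

/-- The radius of convergence of the power series `Σ_k a_k z^k`: the supremum of `|z|`
over those `z` at which the series converges. -/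
noncomputable def radiusOfConv (a : ℕ → ℂ) : ℝ≥0∞ :=
  ⨆ (z : ℂ) (_ : Summable fun k => a k * z ^ k), (‖z‖₊ : ℝ≥0∞)


open scoped Nat


/-- shifted coefficients of the `n`-th derivative of `∑ c r * x^r`. -/
noncomputable def dcoeff (c : ℕ → ℝ) (n r : ℕ) : ℝ :=
  ((n + r).descFactorial n : ℝ) * c (n + r)

lemma dcoeff_nonneg {c : ℕ → ℝ} (hc : ∀ r, 0 ≤ c r) (n r : ℕ) : 0 ≤ dcoeff c n r :=
  mul_nonneg (by positivity) (hc _)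

lemma dcoeff_zero (c : ℕ → ℝ) (r : ℕ) : dcoeff c 0 r = c r := by
  simp [dcoeff]

lemma dcoeff_succ (c : ℕ → ℝ) (n r : ℕ) :
    dcoeff c (n + 1) r = (r + 1 : ℝ) * dcoeff c n (r + 1) := by
  have h1 : n + 1 + r = n + (r + 1) := by omega
  have h2 : (n + (r+1)).descFactorial (n + 1) = (r + 1) * (n + (r+1)).descFactorial n := by
    have := Nat.descFactorial_succ (n + (r+1)) n
    rw [this]
    congr 1
    omega
  rw [dcoeff, h1, h2, dcoeff]
  push_cast
  ring

lemma dcoeff_self (c : ℕ → ℝ) (n : ℕ) : dcoeff c n 0 = (n ! : ℝ) * c n := by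
  simp [dcoeff, Nat.descFactorial_self]


/-- Main workhorse: summability and iterated derivative formula for a power series
with nonnegative coefficients on `(-s, s)`. -/
lemma iteratedDeriv_tsum_powser {c : ℕ → ℝ} (hc : ∀ r, 0 ≤ c r) {s : ℝ}
    (hsum : ∀ x : ℝ, |x| < s → Summable fun r => c r * x ^ r) (n : ℕ) :
    ∀ x : ℝ, |x| < s →
      (Summable fun r => dcoeff c n r * x ^ r) ∧
      iteratedDeriv n (fun y : ℝ => ∑' r, c r * y ^ r) x
        = ∑' r, dcoeff c n r * x ^ r := by
  induction n with
  | zero =>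
    intro x hx
    refine ⟨by simpa [dcoeff_zero] using hsum x hx, ?_⟩
    simp [dcoeff_zero, iteratedDeriv_zero]
  | succ n IH =>
    intro x hx
    have hxs : 0 ≤ s := le_trans (abs_nonneg x) hx.le
    set t₀ : ℝ := (|x| + s) / 2 with ht₀def
    set t₁ : ℝ := (t₀ + s) / 2 with ht₁def
    have hxt₀ : |x| < t₀ := by simp only [ht₀def]; linarith
    have ht₀pos : 0 < t₀ := lt_of_le_of_lt (abs_nonneg x) hxt₀
    have ht₀t₁ : t₀ < t₁ := by simp only [ht₁def]; linarith
    have ht₁s : t₁ < s := by simp only [ht₁def, ht₀def]; linarith [abs_nonneg x]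
    have ht₁pos : 0 < t₁ := ht₀pos.trans ht₀t₁
    -- summability of level-n series at t₁ and a bound M
    obtain ⟨hsum₁, -⟩ := IH t₁ (by rwa [abs_of_pos ht₁pos])
    set M : ℝ := ∑' r, dcoeff c n r * t₁ ^ r with hM
    have hMle : ∀ r, dcoeff c n r * t₁ ^ r ≤ M := by
      intro r
      exact hsum₁.le_tsum r fun j _ =>
        mul_nonneg (dcoeff_nonneg hc n j) (by positivity)
    -- the bound series
    set w : ℕ → ℝ := fun r => M / t₀ * ((r : ℝ) * (t₀ / t₁) ^ r) with hw
    have hsw : Summable w := by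
      have : Summable (fun r : ℕ => (r : ℝ) ^ 1 * (t₀ / t₁) ^ r) := by
        apply summable_pow_mul_geometric_of_norm_lt_one
        rw [Real.norm_eq_abs, abs_of_pos (by positivity)]
        rw [div_lt_one ht₁pos]; exact ht₀t₁
      simpa [hw, pow_one] using this.mul_left (M / t₀)
    have hubound : ∀ (r : ℕ) (y : ℝ), |y| ≤ t₀ →
        |dcoeff c n r * ((r : ℝ) * y ^ (r - 1))| ≤ w r := by
      intro r y hy
      have hd := dcoeff_nonneg hc n r
      rcases r with - | r
      · simp only [Nat.cast_zero, zero_mul, mul_zero, abs_zero, hw]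
        positivity
      · have h1 : |dcoeff c n (r+1) * (((r+1 : ℕ) : ℝ) * y ^ ((r+1) - 1))|
            ≤ dcoeff c n (r+1) * (((r+1 : ℕ) : ℝ) * t₀ ^ r) := by
          simp only [Nat.add_sub_cancel]
          rw [abs_mul, abs_of_nonneg hd, abs_mul, abs_of_nonneg (by positivity : (0:ℝ) ≤ ((r+1:ℕ):ℝ))]
          gcongr
          rw [abs_pow]
          exact pow_le_pow_left₀ (abs_nonneg y) hy r
        refine h1.trans ?_
        have h2 : dcoeff c n (r+1) ≤ M / t₁ ^ (r+1) := by
          rw [le_div_iff₀ (by positivity)]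
          exact hMle (r+1)
        have h3 : dcoeff c n (r+1) * (((r+1 : ℕ) : ℝ) * t₀ ^ r)
            ≤ M / t₁ ^ (r+1) * (((r+1 : ℕ) : ℝ) * t₀ ^ r) := by
          apply mul_le_mul_of_nonneg_right h2 (by positivity)
        refine h3.trans (le_of_eq ?_)
        simp only [hw]
        push_cast
        field_simp
        rw [div_pow t₀ t₁, mul_assoc M (t₁ ^ (r+1)), mul_div_assoc' (t₁ ^ (r+1)),
          mul_div_cancel_left₀ _ (pow_ne_zero _ ht₁pos.ne'), pow_succ t₀ r, mul_assoc M]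
    -- HasDerivAt for the level-n sum at any point of ball 0 t₀
    have hder : ∀ y : ℝ, |y| < t₀ →
        HasDerivAt (fun z : ℝ => ∑' r, dcoeff c n r * z ^ r)
          (∑' r, dcoeff c n r * ((r : ℝ) * y ^ (r - 1))) y := by
      intro y hy
      have hball : y ∈ Metric.ball (0:ℝ) t₀ := by
        simpa [Real.dist_eq] using hy
      refine hasDerivAt_tsum_of_isPreconnected (y₀ := (0:ℝ)) hsw Metric.isOpen_ball
        (convex_ball (0:ℝ) t₀).isPreconnected
        (fun r z _ => ((hasDerivAt_pow r z).const_mul (dcoeff c n r))) ?_ ?_ ?_ hball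
      · intro r z hz
        rw [Real.norm_eq_abs]
        refine hubound r z ?_
        simp only [Metric.mem_ball, Real.dist_eq, sub_zero] at hz
        exact hz.le
      · exact Metric.mem_ball_self ht₀pos
      · apply summable_of_ne_finset_zero (s := {0})
        intro r hr
        have : r ≠ 0 := by simpa using hr
        simp [zero_pow this]
    constructor
    · -- summability at level n+1
      have hbound : ∀ r : ℕ, |dcoeff c (n+1) r * x ^ r| ≤ w (r + 1) := by
        intro r
        have := hubound (r+1) x hxt₀.le
        calc |dcoeff c (n+1) r * x ^ r|
            = |dcoeff c n (r+1) * (((r+1 : ℕ) : ℝ) * x ^ ((r+1) - 1))| := by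
              rw [dcoeff_succ, Nat.add_sub_cancel]
              push_cast
              ring_nf
          _ ≤ w (r+1) := this
      exact Summable.of_norm_bounded ((summable_nat_add_iff 1).mpr hsw) hbound
    · -- the derivative formula
      rw [iteratedDeriv_succ]
      have hEq : (iteratedDeriv n (fun y : ℝ => ∑' r, c r * y ^ r))
          =ᶠ[nhds x] (fun y : ℝ => ∑' r, dcoeff c n r * y ^ r) := by
        have hmem : Metric.ball (0:ℝ) s ∈ nhds x := by
          apply Metric.isOpen_ball.mem_nhds
          simpa [Real.dist_eq] using hx
        filter_upwards [hmem] with y hy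
        simp only [Metric.mem_ball, Real.dist_eq, sub_zero] at hy
        exact (IH y hy).2
      rw [hEq.deriv_eq, (hder x hxt₀).deriv]
      -- reindex
      have hsummable : Summable (fun r => dcoeff c n r * ((r : ℝ) * x ^ (r - 1))) := by
        refine Summable.of_norm_bounded hsw fun r => hubound r x hxt₀.le
      rw [hsummable.tsum_eq_zero_add]
      simp only [Nat.cast_zero, zero_mul, mul_zero, zero_add]
      apply tsum_congr
      intro r
      rw [dcoeff_succ, Nat.add_sub_cancel]
      push_cast
      ring


/-- `Real.log` is real-analytic at positive points. -/
lemma analyticAt_real_log {x : ℝ} (hx : 0 < x) : AnalyticAt ℝ Real.log x := by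
  have hclog : AnalyticAt ℝ Complex.log ((x : ℝ) : ℂ) :=
    (analyticAt_clog (by simp [Complex.mem_slitPlane_iff, hx])).restrictScalars
  have h2 : AnalyticAt ℝ (fun y : ℝ => Complex.log (y : ℂ)) x :=
    hclog.comp (Complex.ofRealCLM.analyticAt x)
  have h1 : AnalyticAt ℝ (fun y : ℝ => (Complex.log (y : ℂ)).re) x :=
    (Complex.reCLM.analyticAt _).comp h2
  apply h1.congr
  filter_upwards [Filter.Tendsto.eventually_const_lt hx Filter.tendsto_id] with y hy
  rw [Complex.log_ofReal_re]

section fAnalytic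
open FormalMultilinearSeries

/-- The sum of an everywhere-convergent scalar power series (ratio test) is analytic. -/
lemma analyticAt_tsum_powser {a : ℕ → ℝ}
    (hpos : ∀ k, 0 < a k)
    (hratio : Filter.Tendsto (fun k => ‖a (k+1)‖ / ‖a k‖) Filter.atTop (nhds 0)) (x : ℝ) :
    AnalyticAt ℝ (fun y : ℝ => ∑' k, a k * y ^ k) x := by
  set p := ofScalars ℝ a with hp
  have hrad : p.radius = ⊤ := by
    apply ofScalars_radius_eq_top_of_tendsto
    · exact Filter.Eventually.of_forall fun n => (hpos n).ne'
    · exact hratio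
  have hball : HasFPowerSeriesOnBall p.sum p 0 p.radius :=
    p.hasFPowerSeriesOnBall (by rw [hrad]; exact ENNReal.zero_lt_top)
  have hx : AnalyticAt ℝ p.sum x := by
    apply hball.analyticAt_of_mem
    rw [hrad]
    simp [EMetric.mem_ball]
  have hfun : p.sum = fun y : ℝ => ∑' k, a k * y ^ k := by
    funext y
    rw [FormalMultilinearSeries.sum]
    apply tsum_congr
    intro k
    rw [hp, ofScalars_apply_eq, smul_eq_mul]
  rwa [hfun] at hx

end fAnalytic


lemma rpow_le_one_add (t nu : ℝ) (ht : 0 ≤ t) (h0 : 0 ≤ nu) (h1 : nu ≤ 1) :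
    t ^ nu ≤ 1 + t := by
  rcases le_or_gt t 1 with h | h
  · have := Real.rpow_le_one ht h h0
    linarith
  · have : t ^ nu ≤ t ^ (1:ℝ) := Real.rpow_le_rpow_of_exponent_le h.le h1
    rw [Real.rpow_one] at this
    linarith

section growth

/-- Key pointwise bound on the COM-Poisson terms. -/
lemma comp_term_le {lam nu : ℝ} (hlam : 0 < lam) (hnu0 : 0 < nu) (hnu1 : nu < 1)
    (x : ℝ) (hx : 0 ≤ x) (k : ℕ) :
    (lam * x) ^ k / (k ! : ℝ) ^ nu
      ≤ ((2:ℝ) ^ (-nu)) ^ k + ((2:ℝ) ^ (1 - nu) * (lam * x) ^ (1/nu)) ^ k / (k ! : ℝ) := by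
  set z : ℝ := lam * x with hz
  have hz0 : 0 ≤ z := by positivity
  set y : ℝ := z ^ (1/nu) with hy
  have hy0 : 0 ≤ y := Real.rpow_nonneg hz0 _
  have hfac : (0:ℝ) < (k ! : ℝ) := by positivity
  -- identity: z^k / (k!)^nu = (y^k/k!)^nu
  have hyk : (y ^ k : ℝ) = z ^ ((1/nu) * k) := by
    rw [hy, ← Real.rpow_natCast (z ^ (1/nu)) k, ← Real.rpow_mul hz0]
  have hid : z ^ k / (k ! : ℝ) ^ nu = (y ^ k / (k ! : ℝ)) ^ nu := by
    rw [Real.div_rpow (by positivity) hfac.le, hyk, ← Real.rpow_mul hz0]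
    have : 1/nu * k * nu = (k : ℝ) := by field_simp [hnu0.ne']
    rw [this, Real.rpow_natCast]
  rw [hid]
  -- split off the factor 2^k
  set τ : ℝ := 2 ^ k * y ^ k / (k ! : ℝ) with hτ
  have hτ0 : 0 ≤ τ := by positivity
  have e1 : ((2:ℝ) ^ (-nu)) ^ k = (2:ℝ) ^ (-(nu * (k:ℝ))) := by
    rw [← Real.rpow_natCast ((2:ℝ) ^ (-nu)) k, ← Real.rpow_mul (by norm_num : (0:ℝ) ≤ 2)]
    ring_nf
  have e2 : τ ^ nu = (2:ℝ) ^ (nu * (k:ℝ)) * (y ^ k / (k ! : ℝ)) ^ nu := by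
    rw [hτ, mul_div_assoc, Real.mul_rpow (by positivity) (by positivity)]
    rw [← Real.rpow_natCast (2:ℝ) k, ← Real.rpow_mul (by norm_num : (0:ℝ) ≤ 2)]
    rw [mul_comm (k:ℝ) nu]
  have hsplit : (y ^ k / (k ! : ℝ)) ^ nu = τ ^ nu * ((2:ℝ) ^ (-nu)) ^ k := by
    rw [e2, e1, mul_assoc, mul_comm ((y ^ k / (k ! : ℝ)) ^ nu), ← mul_assoc,
      ← Real.rpow_add (by norm_num : (0:ℝ) < 2)]
    simp
  rw [hsplit]
  have h1 : τ ^ nu ≤ 1 + τ := rpow_le_one_add τ nu hτ0 hnu0.le hnu1.le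
  have h2 : ((0:ℝ)) ≤ ((2:ℝ) ^ (-nu)) ^ k := by positivity
  calc τ ^ nu * ((2:ℝ) ^ (-nu)) ^ k ≤ (1 + τ) * ((2:ℝ) ^ (-nu)) ^ k := by
        exact mul_le_mul_of_nonneg_right h1 h2
    _ = ((2:ℝ) ^ (-nu)) ^ k + τ * ((2:ℝ) ^ (-nu)) ^ k := by ring
    _ = ((2:ℝ) ^ (-nu)) ^ k + ((2:ℝ) ^ (1 - nu) * y) ^ k / (k ! : ℝ) := by
        congr 1
        rw [hτ, mul_pow]
        have : (2:ℝ) ^ (1-nu) = 2 * (2:ℝ) ^ (-nu) := by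
          rw [show (1:ℝ) - nu = 1 + (-nu) by ring, Real.rpow_add (by norm_num : (0:ℝ) < 2),
            Real.rpow_one]
        rw [this, mul_pow]
        ring
end growth

section ffacts
variable {lam nu : ℝ}

/-- ratio test for the COM-Poisson coefficients -/
lemma comp_ratio_tendsto (hlam : 0 < lam) (hnu0 : 0 < nu) :
    Filter.Tendsto
      (fun k : ℕ => ‖lam ^ (k+1) / ((k+1)! : ℝ) ^ nu‖ / ‖lam ^ k / (k ! : ℝ) ^ nu‖)
      Filter.atTop (nhds 0) := by
  have hratio_eq : ∀ k : ℕ,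
      ‖lam ^ (k+1) / ((k+1)! : ℝ) ^ nu‖ / ‖lam ^ k / (k ! : ℝ) ^ nu‖
        = lam * ((k:ℝ) + 1) ^ (-nu) := by
    intro k
    have hf : (0:ℝ) < (k ! : ℝ) := by positivity
    have hk1 : (0:ℝ) < (k:ℝ) + 1 := by positivity
    have hfs : ((k+1)! : ℝ) = ((k:ℝ) + 1) * (k ! : ℝ) := by
      rw [Nat.factorial_succ]; push_cast; ring
    rw [Real.norm_eq_abs, Real.norm_eq_abs, abs_of_pos (by positivity), abs_of_pos (by positivity),
      hfs, Real.mul_rpow hk1.le hf.le, Real.rpow_neg hk1.le]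
    have h1 : ((k:ℝ)+1) ^ nu ≠ 0 := by positivity
    have h2 : (k ! : ℝ) ^ nu ≠ 0 := by positivity
    have h3 : lam ^ k ≠ 0 := by positivity
    field_simp
    ring
  simp only [hratio_eq]
  have h1 : Filter.Tendsto (fun k : ℕ => ((k:ℝ) + 1)) Filter.atTop Filter.atTop :=
    Filter.tendsto_atTop_add_const_right _ 1 tendsto_natCast_atTop_atTop
  have h2 : Filter.Tendsto (fun k : ℕ => ((k:ℝ) + 1) ^ (-nu)) Filter.atTop (nhds 0) :=
    (tendsto_rpow_neg_atTop hnu0).comp h1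
  simpa using h2.const_mul lam
end ffacts

section fbound
variable {lam nu : ℝ}

lemma comp_summable_le (hlam : 0 < lam) (hnu0 : 0 < nu) (hnu1 : nu < 1)
    {x : ℝ} (hx : 0 ≤ x) :
    Summable (fun k : ℕ => (lam * x) ^ k / (k ! : ℝ) ^ nu) ∧
      (1:ℝ) ≤ (∑' k : ℕ, (lam * x) ^ k / (k ! : ℝ) ^ nu) ∧
      Real.log (∑' k : ℕ, (lam * x) ^ k / (k ! : ℝ) ^ nu)
        ≤ Real.log ((1 - (2:ℝ) ^ (-nu))⁻¹ + 1)
            + (2:ℝ) ^ (1 - nu) * (lam * x) ^ (1/nu) := by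
  set E : ℝ := (2:ℝ) ^ (1 - nu) * (lam * x) ^ (1/nu) with hE
  have hE0 : 0 ≤ E := by positivity
  have hgeo : (2:ℝ) ^ (-nu) < 1 :=
    Real.rpow_lt_one_of_one_lt_of_neg (by norm_num) (by linarith)
  have hgeo0 : (0:ℝ) ≤ (2:ℝ) ^ (-nu) := by positivity
  set b : ℕ → ℝ := fun k => ((2:ℝ) ^ (-nu)) ^ k + E ^ k / (k ! : ℝ) with hb
  have hsb : Summable b :=
    (summable_geometric_of_lt_one hgeo0 hgeo).add (Real.summable_pow_div_factorial E)
  have hterm0 : ∀ k : ℕ, 0 ≤ (lam * x) ^ k / (k ! : ℝ) ^ nu := by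
    intro k; positivity
  have hle : ∀ k : ℕ, (lam * x) ^ k / (k ! : ℝ) ^ nu ≤ b k :=
    fun k => comp_term_le hlam hnu0 hnu1 x hx k
  have hs : Summable (fun k : ℕ => (lam * x) ^ k / (k ! : ℝ) ^ nu) :=
    Summable.of_nonneg_of_le hterm0 hle hsb
  refine ⟨hs, ?_, ?_⟩
  · have h1 := hs.le_tsum 0 (fun j _ => hterm0 j)
    simpa using h1
  · have htsum_le : (∑' k : ℕ, (lam * x) ^ k / (k ! : ℝ) ^ nu)
        ≤ (1 - (2:ℝ) ^ (-nu))⁻¹ + Real.exp E := by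
      calc (∑' k : ℕ, (lam * x) ^ k / (k ! : ℝ) ^ nu) ≤ ∑' k, b k := Summable.tsum_le_tsum hle hs hsb
        _ = (∑' k : ℕ, ((2:ℝ) ^ (-nu)) ^ k) + ∑' k : ℕ, E ^ k / (k ! : ℝ) :=
            Summable.tsum_add (summable_geometric_of_lt_one hgeo0 hgeo)
              (Real.summable_pow_div_factorial E)
        _ = (1 - (2:ℝ) ^ (-nu))⁻¹ + Real.exp E := by
            rw [tsum_geometric_of_lt_one hgeo0 hgeo, Real.exp_eq_exp_ℝ,
              NormedSpace.exp_eq_tsum_div]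
    set C : ℝ := (1 - (2:ℝ) ^ (-nu))⁻¹ with hC
    have hC0 : 0 < C := by
      rw [hC]; exact inv_pos.mpr (by linarith)
    have h2 : C + Real.exp E ≤ (C + 1) * Real.exp E := by
      have h3 : (1:ℝ) ≤ Real.exp E := Real.one_le_exp hE0
      nlinarith [Real.exp_pos E]
    have hfpos : (0:ℝ) < ∑' k : ℕ, (lam * x) ^ k / (k ! : ℝ) ^ nu := by
      have h1 := hs.le_tsum 0 (fun j _ => hterm0 j)
      simp at h1
      linarith
    calc Real.log (∑' k : ℕ, (lam * x) ^ k / (k ! : ℝ) ^ nu)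
        ≤ Real.log ((C + 1) * Real.exp E) :=
          Real.log_le_log hfpos (htsum_le.trans h2)
      _ = Real.log (C + 1) + E := by
          rw [Real.log_mul (by positivity) (Real.exp_pos E).ne', Real.log_exp]
end fbound


/-- analyticity of all iterated derivatives on an open set -/
lemma analyticOnNhd_iteratedDeriv {g : ℝ → ℝ} {V : Set ℝ}
    (hg : AnalyticOnNhd ℝ g V) (n : ℕ) :
    AnalyticOnNhd ℝ (iteratedDeriv n g) V := by
  induction n with
  | zero => simpa [iteratedDeriv_zero] using hg
  | succ n IH => rw [iteratedDeriv_succ]; exact IH.deriv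

/-- If `g` is analytic on an open set containing `[0, ∞)` and all its iterated
derivatives are nonnegative on `[0, 1)`, then they are nonnegative on all of `[0, ∞)`. -/
lemma deriv_nonneg_propagation {g : ℝ → ℝ} {V : Set ℝ}
    (hV : Set.Ici (0:ℝ) ⊆ V) (hg : AnalyticOnNhd ℝ g V)
    (h01 : ∀ n : ℕ, ∀ x : ℝ, 0 ≤ x → x < 1 → 0 ≤ iteratedDeriv n g x) :
    ∀ n : ℕ, ∀ x : ℝ, 0 ≤ x → 0 ≤ iteratedDeriv n g x := by
  have hgiter := analyticOnNhd_iteratedDeriv hg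
  by_contra hcon
  push_neg at hcon
  obtain ⟨n₀, x₀, hx₀, hneg⟩ := hcon
  set B : Set ℝ := {x | 0 ≤ x ∧ ∃ n, iteratedDeriv n g x < 0} with hB
  have hBne : B.Nonempty := ⟨x₀, hx₀, n₀, hneg⟩
  have hBdd : BddBelow B := ⟨0, fun x hx => hx.1⟩
  set b : ℝ := sInf B with hb
  have hb1 : 1 ≤ b := by
    apply le_csInf hBne
    intro x hx
    by_contra hxb
    push_neg at hxb
    obtain ⟨n, hn⟩ := hx.2
    exact absurd (h01 n x hx.1 hxb) (not_le.mpr hn)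
  have hb0 : (0:ℝ) < b := lt_of_lt_of_le one_pos hb1
  have hbV : b ∈ V := hV (le_of_lt hb0)
  have hlt : ∀ x : ℝ, 0 ≤ x → x < b → ∀ n, 0 ≤ iteratedDeriv n g x := by
    intro x hx0 hxb n
    have : x ∉ B := notMem_of_lt_csInf hxb hBdd
    rw [hB] at this
    simp only [Set.mem_setOf_eq, not_and, not_exists, not_lt] at this
    exact this hx0 n
  have hAtb : ∀ n, 0 ≤ iteratedDeriv n g b := by
    intro n
    have hcont : ContinuousWithinAt (iteratedDeriv n g) (Set.Iio b) b :=
      ((hgiter n b hbV).continuousAt).continuousWithinAt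
    refine ge_of_tendsto hcont ?_
    filter_upwards [Ioo_mem_nhdsLT_of_mem (show b ∈ Set.Ioc 0 b from ⟨hb0, le_refl b⟩)]
      with x hx
    exact hlt x hx.1.le hx.2 n
  -- power series expansion of g at b
  obtain ⟨p, hp⟩ := hg b hbV
  have hcoeff : ∀ m : ℕ, (m ! : ℝ) * p.coeff m = iteratedDeriv m g b := by
    intro m
    obtain ⟨r, hr⟩ := hp
    have := hr.factorial_smul (1:ℝ) m
    rw [iteratedDeriv_eq_iteratedFDeriv]
    rw [← this, FormalMultilinearSeries.coeff, nsmul_eq_mul]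
    rfl
  have hcnn : ∀ m, 0 ≤ p.coeff m := by
    intro m
    have h1 := hAtb m
    rw [← hcoeff m] at h1
    by_contra hneg'
    push_neg at hneg'
    nlinarith [(by positivity : (0:ℝ) < (m ! : ℝ))]
  -- local sum representation
  have hloc := hasFPowerSeriesAt_iff.mp hp
  rw [Metric.eventually_nhds_iff] at hloc
  obtain ⟨ε, hε, hball⟩ := hloc
  have hsumc : ∀ t : ℝ, |t| < ε → Summable (fun m => p.coeff m * t ^ m) := by
    intro t ht
    have h1 := hball (by simpa [Real.dist_eq] using ht)
    have h2 := h1.summable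
    apply h2.congr
    intro m
    simp [smul_eq_mul, mul_comm]
  have hval : ∀ t : ℝ, |t| < ε → (∑' m, p.coeff m * t ^ m) = g (b + t) := by
    intro t ht
    have h1 := hball (by simpa [Real.dist_eq] using ht)
    have h2 : (fun m => p.coeff m * t ^ m) = (fun m => t ^ m • p.coeff m) := by
      funext m; simp [smul_eq_mul, mul_comm]
    rw [h2]
    exact h1.tsum_eq
  -- derivative nonnegativity on [b, b+ε)
  have hup : ∀ t : ℝ, 0 ≤ t → t < ε → ∀ n, 0 ≤ iteratedDeriv n g (b + t) := by
    intro t ht0 htε n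
    have habs : |t| < ε := by rwa [abs_of_nonneg ht0]
    obtain ⟨hsum_n, hval_n⟩ := iteratedDeriv_tsum_powser hcnn hsumc n t habs
    have he1 : iteratedDeriv n g (b + t) = iteratedDeriv n (fun y => g (b + y)) t := by
      rw [iteratedDeriv_comp_const_add]
    have he2 : iteratedDeriv n (fun y => g (b + y)) t
        = iteratedDeriv n (fun y : ℝ => ∑' m, p.coeff m * y ^ m) t := by
      apply Filter.EventuallyEq.iteratedDeriv_eq
      have hmem : Metric.ball (0:ℝ) ε ∈ nhds t := by
        apply Metric.isOpen_ball.mem_nhds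
        simpa [Real.dist_eq] using habs
      filter_upwards [hmem] with y hy
      simp only [Metric.mem_ball, Real.dist_eq, sub_zero] at hy
      exact (hval y hy).symm
    rw [he1, he2, hval_n]
    exact tsum_nonneg fun r =>
      mul_nonneg (dcoeff_nonneg hcnn n r) (pow_nonneg ht0 r)
  -- contradiction
  obtain ⟨x, hxB, hxlt⟩ := exists_lt_of_csInf_lt hBne (lt_add_of_pos_right b hε)
  have hbx : b ≤ x := csInf_le hBdd hxB
  obtain ⟨n, hn⟩ := hxB.2
  have := hup (x - b) (by linarith) (by linarith) n
  rw [add_sub_cancel] at this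
  exact absurd this (not_le.mpr hn)


/-- From nonnegativity of all iterated derivatives on `[0,∞)` and a lower bound on the
`r₀`-th derivative at `0`, deduce a polynomial lower bound for `g`. -/
lemma poly_lower_bound {g : ℝ → ℝ} {V : Set ℝ} (hV : Set.Ici (0:ℝ) ⊆ V)
    (hg : AnalyticOnNhd ℝ g V)
    (hnn : ∀ n : ℕ, ∀ x : ℝ, 0 ≤ x → 0 ≤ iteratedDeriv n g x)
    (r₀ : ℕ) (K : ℝ) (hK0 : 0 ≤ K) (hK : K ≤ iteratedDeriv r₀ g 0) :
    ∀ x : ℝ, 0 ≤ x → K * x ^ r₀ / r₀ ! ≤ g x := by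
  have hmain : ∀ j : ℕ, j ≤ r₀ → ∀ x : ℝ, 0 ≤ x →
      K * x ^ j / j ! ≤ iteratedDeriv (r₀ - j) g x := by
    intro j
    induction j with
    | zero =>
      intro _ x hx
      have hder : ∀ y ∈ interior (Set.Ici (0:ℝ)), 0 ≤ deriv (iteratedDeriv r₀ g) y := by
        intro y hy
        rw [interior_Ici] at hy
        have : deriv (iteratedDeriv r₀ g) y = iteratedDeriv (r₀ + 1) g y := by
          rw [← iteratedDeriv_succ]
        rw [this]
        exact hnn (r₀+1) y (le_of_lt hy)
      have hmono : MonotoneOn (iteratedDeriv r₀ g) (Set.Ici 0) := by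
        apply monotoneOn_of_deriv_nonneg (convex_Ici 0)
        · intro y hy
          exact ((analyticOnNhd_iteratedDeriv hg r₀ y (hV hy)).continuousAt).continuousWithinAt
        · intro y hy
          rw [interior_Ici] at hy
          exact ((analyticOnNhd_iteratedDeriv hg r₀ y (hV (Set.mem_Ici.mpr (le_of_lt hy)))).differentiableAt).differentiableWithinAt
        · exact hder
      have h0x := hmono (Set.self_mem_Ici) (Set.mem_Ici.mpr hx) hx
      have : K ≤ iteratedDeriv r₀ g x := le_trans hK h0x
      simpa using this
    | succ j IH =>
      intro hj1 x hx
      have hj : j ≤ r₀ := le_trans (Nat.le_succ j) hj1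
      set m : ℕ := r₀ - (j+1) with hm
      have hm1 : m + 1 = r₀ - j := by omega
      -- ψ and its derivative
      set ψ : ℝ → ℝ := fun y => iteratedDeriv m g y - K * y ^ (j+1) / (j+1)! with hψ
      have hψder : ∀ y ∈ V, HasDerivAt ψ (iteratedDeriv (r₀ - j) g y - K * y ^ j / j !) y := by
        intro y hy
        have h1 : HasDerivAt (iteratedDeriv m g) (iteratedDeriv (r₀ - j) g y) y := by
          have hd := ((analyticOnNhd_iteratedDeriv hg m) y hy).differentiableAt
          have h2 := hd.hasDerivAt
          have h3 : deriv (iteratedDeriv m g) y = iteratedDeriv (r₀ - j) g y := by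
            rw [← hm1, ← iteratedDeriv_succ]
          rwa [h3] at h2
        have h4 : HasDerivAt (fun y : ℝ => K * y ^ (j+1) / (j+1)!)
            (K * y ^ j / j !) y := by
          have h5 := ((hasDerivAt_pow (j+1) y).const_mul K).div_const ((j+1)! : ℝ)
          have h6 : K * (((j:ℕ)+1 : ℝ) * y ^ ((j+1) - 1)) / ((j+1)! : ℝ)
              = K * y ^ j / j ! := by
            rw [Nat.add_sub_cancel, Nat.factorial_succ]
            push_cast
            have : ((j:ℝ) + 1) ≠ 0 := by positivity
            field_simp
          rw [← h6]
          exact h5.congr_deriv (by rw [Nat.cast_succ])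
        exact h1.sub h4
      have hmono : MonotoneOn ψ (Set.Ici 0) := by
        apply monotoneOn_of_deriv_nonneg (convex_Ici 0)
        · intro y hy
          exact ((hψder y (hV hy)).continuousAt).continuousWithinAt
        · intro y hy
          rw [interior_Ici] at hy
          exact ((hψder y (hV (Set.mem_Ici.mpr (le_of_lt hy)))).differentiableAt).differentiableWithinAt
        · intro y hy
          rw [interior_Ici] at hy
          rw [(hψder y (hV (Set.mem_Ici.mpr (le_of_lt hy)))).deriv]
          have := IH hj y (le_of_lt hy)
          linarith
      have h7 := hmono (Set.self_mem_Ici) (Set.mem_Ici.mpr hx) hx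
      have h8 : ψ 0 = iteratedDeriv m g 0 := by
        simp [hψ, zero_pow (Nat.succ_ne_zero j)]
      have h9 : 0 ≤ ψ 0 := by rw [h8]; exact hnn m 0 le_rfl
      have h10 : 0 ≤ ψ x := le_trans h9 h7
      rw [hψ] at h10
      simp only [sub_nonneg] at h10
      exact h10
  have := hmain r₀ le_rfl
  simpa [Nat.sub_self, iteratedDeriv_zero] using this

/-- Let `λ > 0`, `ν ∈ (0,1)`, `μ > 0`, and `(q_r)_{r ≥ 1}` nonnegative reals summing
to `1`, with `exp(μ · Σ_{r≥1} q_r z^r) = Σ_{k≥0} (λz)^k/(k!)^ν` for all complex `z`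
with `|z|` less than the radius of convergence of `Σ_{r≥1} q_r z^r`.  If `d` is the
unique integer with `1/ν ∈ (d−1, d]`, then `q_r = 0` for all `r > d`: the generating
function `G(z) = Σ_{r≥1} q_r z^r` is a polynomial of degree at most `d`. -/
theorem generating_function_is_polynomial (lam nu μ : ℝ)
    (hlam : 0 < lam) (hnu : nu ∈ Set.Ioo (0 : ℝ) 1) (hμ : 0 < μ)
    (q : ℕ → ℝ) (hq0 : q 0 = 0) (hq : ∀ r, 0 ≤ q r) (hqsum : ∑' r, q r = 1)
    (heq : ∀ z : ℂ, (‖z‖₊ : ℝ≥0∞) < radiusOfConv (fun r => (q r : ℂ)) →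
      Complex.exp ((μ : ℂ) * ∑' r : ℕ, (q r : ℂ) * z ^ r)
        = ∑' k : ℕ, ((lam : ℂ) * z) ^ k / (((k.factorial : ℝ) ^ nu : ℝ) : ℂ))
    (d : ℤ) (hd1 : (d : ℝ) - 1 < 1 / nu) (hd2 : 1 / nu ≤ (d : ℝ)) :
    ∀ r : ℕ, (d : ℝ) < (r : ℝ) → q r = 0 := by
  obtain ⟨hnu0, hnu1⟩ := hnu
  intro r₀ hr₀
  -- summability of q
  have hQs : Summable q := by
    by_contra hns
    rw [tsum_eq_zero_of_not_summable hns] at hqsum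
    exact one_ne_zero hqsum.symm
  -- the radius of convergence is at least 1
  have hrad : (1 : ℝ≥0∞) ≤ radiusOfConv (fun r => (q r : ℂ)) := by
    have hsq : Summable fun r : ℕ => ((q r : ℂ)) * (1:ℂ) ^ r := by
      simpa using (Complex.summable_ofReal.mpr hQs)
    have h1 : (↑‖(1:ℂ)‖₊ : ℝ≥0∞) ≤ radiusOfConv (fun r => (q r : ℂ)) :=
      le_iSup₂ (f := fun (z : ℂ) (_ : Summable fun k => ((q k : ℂ)) * z ^ k)
        => (‖z‖₊ : ℝ≥0∞)) (1:ℂ) hsq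
    simpa using h1
  -- real form of the functional equation on (-1, 1)
  set f : ℝ → ℝ := fun x => ∑' k : ℕ, (lam * x) ^ k / (k ! : ℝ) ^ nu with hf
  have hexp : ∀ x : ℝ, |x| < 1 → Real.exp (μ * ∑' r : ℕ, q r * x ^ r) = f x := by
    intro x hx
    have hnorm : (‖(x:ℂ)‖₊ : ℝ≥0∞) < radiusOfConv (fun r => (q r : ℂ)) := by
      refine lt_of_lt_of_le ?_ hrad
      rw [ENNReal.coe_lt_one_iff]
      rw [← NNReal.coe_lt_one]
      simpa [Real.norm_eq_abs] using hx
    have h1 := heq (x:ℂ) hnorm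
    have hL : (∑' r : ℕ, ((q r : ℂ)) * (x:ℂ) ^ r) = ((∑' r : ℕ, q r * x ^ r : ℝ) : ℂ) := by
      rw [Complex.ofReal_tsum]
      apply tsum_congr
      intro r
      push_cast
      ring
    have hR : (∑' k : ℕ, ((lam : ℂ) * (x:ℂ)) ^ k / (((k ! : ℝ) ^ nu : ℝ) : ℂ))
        = ((f x : ℝ) : ℂ) := by
      rw [hf, Complex.ofReal_tsum]
      apply tsum_congr
      intro k
      push_cast
      ring
    rw [hL, hR] at h1
    have h2 : ((μ:ℂ) * ((∑' r : ℕ, q r * x ^ r : ℝ) : ℂ))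
        = (((μ * ∑' r : ℕ, q r * x ^ r : ℝ)) : ℂ) := by push_cast; ring
    rw [h2, ← Complex.ofReal_exp] at h1
    exact_mod_cast h1
  -- f is analytic and positive
  have hfan : ∀ x : ℝ, AnalyticAt ℝ f x := by
    intro x
    have h1 := analyticAt_tsum_powser (a := fun k => lam ^ k / (k ! : ℝ) ^ nu)
      (fun k => by positivity) (comp_ratio_tendsto hlam hnu0) x
    have h2 : (fun y : ℝ => ∑' k : ℕ, (lam ^ k / (k ! : ℝ) ^ nu) * y ^ k) = f := by
      funext y
      rw [hf]
      apply tsum_congr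
      intro k
      rw [mul_pow]
      ring
    rwa [h2] at h1
  have hfcont : Continuous f := continuous_iff_continuousAt.mpr fun x => (hfan x).continuousAt
  set V : Set ℝ := {x | 0 < f x} with hV
  have hVopen : IsOpen V := isOpen_lt continuous_const hfcont
  have hIciV : Set.Ici (0:ℝ) ⊆ V := by
    intro x hx
    have := (comp_summable_le hlam hnu0 hnu1 (Set.mem_Ici.mp hx)).2.1
    rw [hV]
    simp only [Set.mem_setOf_eq, hf]
    linarith
  have hBallV : ∀ x : ℝ, |x| < 1 → x ∈ V := by
    intro x hx
    rw [hV]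
    simp only [Set.mem_setOf_eq]
    rw [← hexp x hx]
    exact Real.exp_pos _
  set g : ℝ → ℝ := fun x => Real.log (f x) with hg
  have hgV : AnalyticOnNhd ℝ g V := by
    intro x hx
    exact (analyticAt_real_log hx).comp (hfan x)
  -- g as a power series with nonnegative coefficients on (-1,1)
  set c₁ : ℕ → ℝ := fun r => μ * q r with hc₁
  have hc₁nn : ∀ r, 0 ≤ c₁ r := fun r => mul_nonneg hμ.le (hq r)
  have hsums : ∀ x : ℝ, |x| < 1 → Summable fun r => c₁ r * x ^ r := by
    intro x hx
    apply Summable.of_norm_bounded (hQs.mul_left μ)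
    intro r
    rw [Real.norm_eq_abs, abs_mul, abs_of_nonneg (hc₁nn r), abs_pow]
    calc c₁ r * |x| ^ r ≤ c₁ r * 1 := by
          apply mul_le_mul_of_nonneg_left _ (hc₁nn r)
          exact pow_le_one₀ (abs_nonneg x) hx.le
      _ = μ * q r := by rw [mul_one]
  have hgc : ∀ x : ℝ, |x| < 1 → g x = ∑' r, c₁ r * x ^ r := by
    intro x hx
    have h1 : ∑' r, c₁ r * x ^ r = μ * ∑' r, q r * x ^ r := by
      rw [← tsum_mul_left]
      apply tsum_congr
      intro r
      rw [hc₁]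
      ring
    rw [h1]
    show Real.log (f x) = _
    rw [← hexp x hx, Real.log_exp]
  -- transfer iterated derivatives of g to the series on (-1,1)
  have hgiter01 : ∀ (n : ℕ) (x : ℝ), |x| < 1 →
      iteratedDeriv n g x = ∑' r, dcoeff c₁ n r * x ^ r := by
    intro n x hx
    have heq' : g =ᶠ[nhds x] (fun y : ℝ => ∑' r, c₁ r * y ^ r) := by
      have hmem : Metric.ball (0:ℝ) 1 ∈ nhds x := by
        apply Metric.isOpen_ball.mem_nhds
        simpa [Real.dist_eq] using hx
      filter_upwards [hmem] with y hy
      simp only [Metric.mem_ball, Real.dist_eq, sub_zero] at hy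
      exact hgc y hy
    rw [heq'.iteratedDeriv_eq n]
    exact (iteratedDeriv_tsum_powser hc₁nn hsums n x hx).2
  have h01 : ∀ n : ℕ, ∀ x : ℝ, 0 ≤ x → x < 1 → 0 ≤ iteratedDeriv n g x := by
    intro n x hx0 hx1
    rw [hgiter01 n x (by rwa [abs_of_nonneg hx0])]
    exact tsum_nonneg fun r => mul_nonneg (dcoeff_nonneg hc₁nn n r) (pow_nonneg hx0 r)
  -- value of the derivatives at 0
  have hg0 : ∀ n : ℕ, iteratedDeriv n g 0 = (n ! : ℝ) * (μ * q n) := by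
    intro n
    rw [hgiter01 n 0 (by norm_num)]
    rw [tsum_eq_single 0 (fun r hr => by simp [zero_pow hr])]
    simp [dcoeff_self, hc₁]
  -- propagate nonnegativity to all of [0,∞)
  have hnn := deriv_nonneg_propagation hIciV hgV h01
  -- the polynomial lower bound
  set K : ℝ := (r₀ ! : ℝ) * (μ * q r₀) with hK
  have hK0 : 0 ≤ K := mul_nonneg (by positivity) (mul_nonneg hμ.le (hq r₀))
  have hKle : K ≤ iteratedDeriv r₀ g 0 := le_of_eq (hg0 r₀).symm
  have hlow := poly_lower_bound hIciV hgV hnn r₀ K hK0 hKle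
  have hlow' : ∀ x : ℝ, 0 ≤ x → μ * q r₀ * x ^ r₀ ≤ g x := by
    intro x hx
    have h1 := hlow x hx
    have h2 : K * x ^ r₀ / (r₀ ! : ℝ) = μ * q r₀ * x ^ r₀ := by
      rw [hK]
      field_simp
    rwa [h2] at h1
  -- integer bookkeeping
  have hd_ge1 : (1:ℝ) ≤ (d:ℝ) := by
    have h1 : (1:ℝ) < 1/nu := (one_lt_one_div hnu0 hnu1)
    linarith
  have hr₀1 : 1 ≤ r₀ := by
    by_contra hcon
    push_neg at hcon
    have hz : r₀ = 0 := by omega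
    subst hz
    rw [Nat.cast_zero] at hr₀
    linarith
  have hdr : (d:ℝ) ≤ ((r₀ - 1 : ℕ) : ℝ) := by
    have h1 : d < (r₀ : ℤ) := by exact_mod_cast hr₀
    have h2 : d ≤ (r₀ : ℤ) - 1 := by omega
    have h3 : ((r₀ - 1 : ℕ) : ℤ) = (r₀ : ℤ) - 1 := by omega
    calc (d:ℝ) ≤ (((r₀:ℤ) - 1 : ℤ) : ℝ) := by exact_mod_cast h2
      _ = ((r₀ - 1 : ℕ) : ℝ) := by rw [← h3]; norm_num
  -- growth bound kills positivity of q r₀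
  by_contra hqne
  have hqpos : 0 < q r₀ := lt_of_le_of_ne (hq r₀) (Ne.symm hqne)
  set A : ℝ := Real.log ((1 - (2:ℝ) ^ (-nu))⁻¹ + 1) with hA
  set B : ℝ := (2:ℝ) ^ (1 - nu) * lam ^ (1/nu) with hB
  have hA0 : 0 ≤ A := by
    rw [hA]
    apply Real.log_nonneg
    have hgeo : (2:ℝ) ^ (-nu) < 1 :=
      Real.rpow_lt_one_of_one_lt_of_neg (by norm_num) (by linarith)
    have : 0 < (1 - (2:ℝ) ^ (-nu))⁻¹ := inv_pos.mpr (by linarith)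
    linarith
  have hB0 : 0 ≤ B := by rw [hB]; positivity
  have hkey : ∀ x : ℝ, 1 ≤ x → μ * q r₀ * x ≤ A + B := by
    intro x hx1
    have hx0 : (0:ℝ) ≤ x := by linarith
    have hgle := (comp_summable_le hlam hnu0 hnu1 hx0).2.2
    have hup : g x ≤ A + B * x ^ (r₀ - 1) := by
      have h2 : (lam * x) ^ (1/nu) = lam ^ (1/nu) * x ^ (1/nu) :=
        Real.mul_rpow hlam.le hx0
      have h3 : x ^ (1/nu) ≤ x ^ ((r₀ - 1 : ℕ) : ℝ) :=
        Real.rpow_le_rpow_of_exponent_le hx1 (le_trans hd2 hdr)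
      have h4 : x ^ ((r₀ - 1 : ℕ) : ℝ) = x ^ (r₀ - 1 : ℕ) := Real.rpow_natCast x _
      calc g x ≤ A + (2:ℝ) ^ (1 - nu) * (lam * x) ^ (1/nu) := hgle
        _ = A + ((2:ℝ) ^ (1 - nu) * lam ^ (1/nu)) * x ^ (1/nu) := by rw [h2]; ring
        _ ≤ A + B * x ^ (r₀ - 1 : ℕ) := by
            rw [hB]
            have h5 : ((2:ℝ) ^ (1 - nu) * lam ^ (1/nu)) * x ^ (1/nu)
                ≤ ((2:ℝ) ^ (1 - nu) * lam ^ (1/nu)) * x ^ (r₀ - 1 : ℕ) := by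
              apply mul_le_mul_of_nonneg_left _ (by positivity)
              rw [← h4]
              exact h3
            linarith
    have hxp : (0:ℝ) < x ^ (r₀ - 1) := by positivity
    have hxp1 : (1:ℝ) ≤ x ^ (r₀ - 1) := one_le_pow₀ hx1
    have hsplit : x ^ r₀ = x ^ (r₀ - 1) * x := by
      conv_lhs => rw [show r₀ = (r₀ - 1) + 1 by omega]
      rw [pow_succ]
    have h6 : μ * q r₀ * x * x ^ (r₀ - 1) ≤ (A + B) * x ^ (r₀ - 1) := by
      calc μ * q r₀ * x * x ^ (r₀ - 1) = μ * q r₀ * x ^ r₀ := by rw [hsplit]; ring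
        _ ≤ g x := hlow' x hx0
        _ ≤ A + B * x ^ (r₀ - 1) := hup
        _ ≤ (A + B) * x ^ (r₀ - 1) := by nlinarith
    exact le_of_mul_le_mul_right h6 hxp
  -- contradiction
  set x₁ : ℝ := (A + B) / (μ * q r₀) + 1 with hx₁
  have hx₁1 : 1 ≤ x₁ := by
    rw [hx₁]
    have : 0 ≤ (A + B) / (μ * q r₀) := by positivity
    linarith
  have h7 := hkey x₁ hx₁1
  rw [hx₁] at h7
  have h8 : μ * q r₀ * ((A + B) / (μ * q r₀) + 1) = (A + B) + μ * q r₀ := by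
    field_simp
  rw [h8] at h7
  nlinarith
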